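/- For every pseudo-Boolean function f: {0,1}^n → ℝ and every S ⊆ N, Φ_B(f,S) = f_S(S) − f_S(∅), where f_S is the orthogonal projection of f onto V_S = span{u_T : T ⊆ S} with respect to the inner product ⟨f,g⟩ = 2^{-n} Σ_{x∈{0,1}^n} f(x)g(x). -/

import Mathlib

open Finset

/-- The Banzhaf influence index `Φ_B(f,S) = 2^{-(n-|S|)} Σ_{T⊆N∖S} (f(T∪S) − f(T))`. -/
noncomputable def banzhafInfluence {n : ℕ} (f : Finset (Fin n) → ℝ) (S : Finset (Fin n)) : ℝ :=
  (1 / 2 ^ (n - S.card)) * ∑ T ∈ (univ \ S).powerset, (f (T ∪ S) - f T)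

/-- The unanimity function `u_T(x) = Π_{i∈T} x_i` on `{0,1}^n`. -/
def unanimity {n : ℕ} (T X : Finset (Fin n)) : ℝ :=
  ∏ i ∈ T, (if i ∈ X then (1 : ℝ) else 0)

lemma unanimity_eq {n : ℕ} (T X : Finset (Fin n)) :
    unanimity T X = if T ⊆ X then 1 else 0 := by
  unfold unanimity
  by_cases h : T ⊆ X
  · rw [if_pos h, Finset.prod_eq_one]
    intro i hi; rw [if_pos (h hi)]
  · rw [if_neg h]
    obtain ⟨i, hi, hix⟩ := Finset.not_subset.mp h
    exact Finset.prod_eq_zero hi (by rw [if_neg hix])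

/-- The conditional expectation of `f` given the coordinates in `S`. -/
noncomputable def condExp {n : ℕ} (f : Finset (Fin n) → ℝ) (S : Finset (Fin n))
    (X : Finset (Fin n)) : ℝ :=
  (1 / 2 ^ (n - S.card)) * ∑ A ∈ (univ \ S).powerset, f ((X ∩ S) ∪ A)

lemma inter_helper {n : ℕ} {B C S : Finset (Fin n)} (hB : B ⊆ S) (hC : C ⊆ univ \ S) :
    (B ∪ C) ∩ S = B := by
  ext i
  simp only [Finset.mem_inter, Finset.mem_union]
  constructor
  · rintro ⟨hi | hi, hiS⟩
    · exact hi
    · exact absurd hiS (Finset.mem_sdiff.mp (hC hi)).2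
  · exact fun hi => ⟨Or.inl hi, hB hi⟩

lemma union_eq {n : ℕ} (X S : Finset (Fin n)) : (X ∩ S) ∪ (X \ S) = X := by
  ext i; simp only [Finset.mem_union, Finset.mem_inter, Finset.mem_sdiff]; tauto

lemma sum_decomp {n : ℕ} (S : Finset (Fin n)) (F : Finset (Fin n) → ℝ) :
    ∑ X : Finset (Fin n), F X
      = ∑ B ∈ S.powerset, ∑ C ∈ (univ \ S).powerset, F (B ∪ C) := by
  rw [← Finset.sum_product']
  apply Finset.sum_nbij' (fun X => (X ∩ S, X \ S)) (fun p => p.1 ∪ p.2)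
  · intro X _
    simp only [Finset.mem_product, Finset.mem_powerset]
    exact ⟨Finset.inter_subset_right, fun i hi => by
      simp only [Finset.mem_sdiff, Finset.mem_univ, true_and]
      exact (Finset.mem_sdiff.mp hi).2⟩
  · intro p _; exact Finset.mem_univ _
  · intro X _; exact union_eq X S
  · rintro ⟨B, C⟩ hp
    simp only [Finset.mem_product, Finset.mem_powerset] at hp
    have h1 : (B ∪ C) ∩ S = B := inter_helper hp.1 hp.2
    have h2 : (B ∪ C) \ S = C := by
      ext i
      simp only [Finset.mem_sdiff, Finset.mem_union]
      constructor
      · rintro ⟨hi | hi, hiS⟩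
        · exact absurd (hp.1 hi) hiS
        · exact hi
      · intro hi
        exact ⟨Or.inr hi, (Finset.mem_sdiff.mp (hp.2 hi)).2⟩
    simp [h1, h2]
  · intro X _; rw [union_eq]

lemma card_powerset_compl {n : ℕ} (S : Finset (Fin n)) :
    ((univ \ S : Finset (Fin n)).powerset).card = 2 ^ (n - S.card) := by
  rw [Finset.card_powerset, Finset.card_sdiff_of_subset (Finset.subset_univ S), Finset.card_univ,
    Fintype.card_fin]

/-- Orthogonality: `f - condExp f S` is orthogonal to every `unanimity T` with `T ⊆ S`. -/
lemma orth {n : ℕ} (f : Finset (Fin n) → ℝ) (S T : Finset (Fin n)) (hT : T ⊆ S) :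
    ∑ X : Finset (Fin n), (f X - condExp f S X) * unanimity T X = 0 := by
  rw [sum_decomp S]
  apply Finset.sum_eq_zero
  intro B hB
  rw [Finset.mem_powerset] at hB
  by_cases hTB : T ⊆ B
  · have hg : ∀ C ∈ (univ \ S : Finset (Fin n)).powerset,
        condExp f S (B ∪ C) = (1 / 2 ^ (n - S.card)) * ∑ A ∈ (univ \ S).powerset, f (B ∪ A) := by
      intro C hC
      rw [Finset.mem_powerset] at hC
      unfold condExp
      rw [inter_helper hB hC]
    have hu : ∀ C ∈ (univ \ S : Finset (Fin n)).powerset, unanimity T (B ∪ C) = 1 := by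
      intro C _
      rw [unanimity_eq, if_pos (hTB.trans Finset.subset_union_left)]
    calc ∑ C ∈ (univ \ S).powerset, (f (B ∪ C) - condExp f S (B ∪ C)) * unanimity T (B ∪ C)
        = ∑ C ∈ (univ \ S).powerset,
            (f (B ∪ C) - (1 / 2 ^ (n - S.card)) * ∑ A ∈ (univ \ S).powerset, f (B ∪ A)) := by
          apply Finset.sum_congr rfl
          intro C hC
          rw [hg C hC, hu C hC, mul_one]
      _ = 0 := by
          rw [Finset.sum_sub_distrib, Finset.sum_const, card_powerset_compl, nsmul_eq_mul]
          have h2 : (2:ℝ) ^ (n - S.card) ≠ 0 := by positivity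
          push_cast
          field_simp
          ring
  · apply Finset.sum_eq_zero
    intro C hC
    rw [Finset.mem_powerset] at hC
    have : ¬ T ⊆ B ∪ C := by
      intro h
      apply hTB
      intro i hi
      rcases Finset.mem_union.mp (h hi) with h1 | h1
      · exact h1
      · exact absurd (hT hi) (Finset.mem_sdiff.mp (hC h1)).2
    rw [unanimity_eq, if_neg this, mul_zero]

/-- Möbius inversion over the subset lattice. -/
lemma mobius {n : ℕ} (Y : Finset (Fin n)) (h : Finset (Fin n) → ℝ) :
    ∑ T ∈ Y.powerset, ∑ B ∈ T.powerset, (-1:ℝ) ^ (T.card - B.card) * h B = h Y := by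
  rw [Finset.sum_comm' (s' := fun B => Y.powerset.filter (fun T => B ⊆ T)) (t' := Y.powerset)
    (by
      intro T B
      simp only [Finset.mem_powerset, Finset.mem_filter]
      constructor
      · rintro ⟨h1, h2⟩; exact ⟨⟨h1, h2⟩, h2.trans h1⟩
      · rintro ⟨⟨h1, h2⟩, _⟩; exact ⟨h1, h2⟩)]
  have key : ∀ B ∈ Y.powerset,
      ∑ T ∈ Y.powerset.filter (fun T => B ⊆ T), (-1:ℝ) ^ (T.card - B.card) * h B
        = (if B = Y then 1 else 0) * h B := by
    intro B hB
    rw [Finset.mem_powerset] at hB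
    have : ∑ T ∈ Y.powerset.filter (fun T => B ⊆ T), (-1:ℝ) ^ (T.card - B.card) * h B
        = ∑ U ∈ (Y \ B).powerset, (-1:ℝ) ^ U.card * h B := by
      apply Finset.sum_nbij' (fun T => T \ B) (fun U => B ∪ U)
      · intro T hT
        simp only [Finset.mem_filter, Finset.mem_powerset] at hT ⊢
        exact Finset.sdiff_subset_sdiff hT.1 Finset.Subset.rfl
      · intro U hU
        simp only [Finset.mem_powerset] at hU
        simp only [Finset.mem_filter, Finset.mem_powerset]
        exact ⟨Finset.union_subset hB (hU.trans (Finset.sdiff_subset)), Finset.subset_union_left⟩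
      · intro T hT
        simp only [Finset.mem_filter, Finset.mem_powerset] at hT
        exact Finset.union_sdiff_of_subset hT.2
      · intro U hU
        simp only [Finset.mem_powerset] at hU
        have : Disjoint B U :=
          Finset.disjoint_sdiff.mono_right hU
        exact Finset.union_sdiff_cancel_left this
      · intro T hT
        simp only [Finset.mem_filter, Finset.mem_powerset] at hT
        congr 1
        congr 1
        rw [Finset.card_sdiff_of_subset hT.2]
    have hcast : ∑ U ∈ (Y \ B).powerset, (-1:ℝ) ^ U.card
        = if Y \ B = ∅ then 1 else 0 := by
      have := congrArg (Int.cast : ℤ → ℝ)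
        (Finset.sum_powerset_neg_one_pow_card (x := Y \ B))
      push_cast at this
      simpa using this
    rw [this, ← Finset.sum_mul, hcast]
    congr 1
    by_cases hBY : B = Y
    · rw [if_pos hBY, if_pos (by rw [hBY, Finset.sdiff_self])]
    · rw [if_neg hBY, if_neg (by
        intro hcon
        exact hBY (Finset.Subset.antisymm hB (Finset.sdiff_eq_empty_iff_subset.mp hcon)))]
  rw [Finset.sum_congr rfl key]
  simp only [ite_mul, one_mul, zero_mul]
  rw [Finset.sum_ite_eq' Y.powerset Y h, if_pos (Finset.mem_powerset.mpr Finset.Subset.rfl)]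

lemma condExp_inter {n : ℕ} (f : Finset (Fin n) → ℝ) (S X : Finset (Fin n)) :
    condExp f S (X ∩ S) = condExp f S X := by
  unfold condExp
  rw [Finset.inter_assoc, Finset.inter_self]

/-- `condExp f S` lies in the span of the unanimity functions `u_T`, `T ⊆ S`. -/
lemma condExp_in_span {n : ℕ} (f : Finset (Fin n) → ℝ) (S : Finset (Fin n)) :
    ∃ d : Finset (Fin n) → ℝ, ∀ X : Finset (Fin n),
      ∑ T ∈ S.powerset, d T * unanimity T X = condExp f S X := by
  refine ⟨fun T => ∑ B ∈ T.powerset, (-1:ℝ) ^ (T.card - B.card) * condExp f S B, fun X => ?_⟩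
  have step1 : ∑ T ∈ S.powerset,
      (∑ B ∈ T.powerset, (-1:ℝ) ^ (T.card - B.card) * condExp f S B) * unanimity T X
      = ∑ T ∈ (X ∩ S).powerset,
          ∑ B ∈ T.powerset, (-1:ℝ) ^ (T.card - B.card) * condExp f S B := by
    rw [show ((X ∩ S).powerset : Finset (Finset (Fin n)))
        = S.powerset.filter (fun T => T ⊆ X) by
      ext T
      simp only [Finset.mem_powerset, Finset.mem_filter, Finset.subset_inter_iff]
      tauto]
    rw [Finset.sum_filter]
    apply Finset.sum_congr rfl
    intro T _
    rw [unanimity_eq]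
    by_cases h : T ⊆ X <;> simp [h]
  rw [step1, mobius, condExp_inter]

/-- if `f_S = Σ_{T⊆S} c(T) u_T` is the best least-squares approximation of
`f` among all multilinear polynomials depending only on the variables in `S`, then
`Φ_B(f,S) = f_S(S) − f_S(∅)`. -/
theorem banzhafInfluence_eq_fS_diff (n : ℕ) (f : Finset (Fin n) → ℝ)
    (S : Finset (Fin n)) (c : Finset (Fin n) → ℝ)
    (hmin : ∀ d : Finset (Fin n) → ℝ,
        ∑ X : Finset (Fin n), (f X - ∑ T ∈ S.powerset, c T * unanimity T X) ^ 2
          ≤ ∑ X : Finset (Fin n), (f X - ∑ T ∈ S.powerset, d T * unanimity T X) ^ 2) :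
    banzhafInfluence f S
      = (∑ T ∈ S.powerset, c T * unanimity T S)
        - (∑ T ∈ S.powerset, c T * unanimity T (∅ : Finset (Fin n))) := by
  obtain ⟨d, hd⟩ := condExp_in_span f S
  set g := condExp f S with hgdef
  set p : Finset (Fin n) → ℝ := fun X => ∑ T ∈ S.powerset, c T * unanimity T X with hp
  -- orthogonality of f - g with g - p
  have horth : ∑ X : Finset (Fin n), (f X - g X) * (g X - p X) = 0 := by
    have hdiff : ∀ X, g X - p X = ∑ T ∈ S.powerset, (d T - c T) * unanimity T X := by
      intro X
      rw [← hd X]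
      simp only [hp]
      rw [← Finset.sum_sub_distrib]
      apply Finset.sum_congr rfl
      intro T _
      ring
    calc ∑ X : Finset (Fin n), (f X - g X) * (g X - p X)
        = ∑ X : Finset (Fin n), ∑ T ∈ S.powerset,
            (d T - c T) * ((f X - g X) * unanimity T X) := by
          apply Finset.sum_congr rfl
          intro X _
          rw [hdiff X, Finset.mul_sum]
          apply Finset.sum_congr rfl
          intro T _
          ring
      _ = ∑ T ∈ S.powerset, (d T - c T) *
            ∑ X : Finset (Fin n), (f X - g X) * unanimity T X := by
          rw [Finset.sum_comm]
          apply Finset.sum_congr rfl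
          intro T _
          rw [Finset.mul_sum]
      _ = 0 := by
          apply Finset.sum_eq_zero
          intro T hT
          rw [orth f S T (Finset.mem_powerset.mp hT), mul_zero]
  -- Pythagoras
  have hpyth : ∑ X : Finset (Fin n), (f X - p X) ^ 2
      = ∑ X : Finset (Fin n), (f X - g X) ^ 2
        + ∑ X : Finset (Fin n), (g X - p X) ^ 2 := by
    have expand : ∀ X : Finset (Fin n), (f X - p X) ^ 2
        = (f X - g X) ^ 2 + 2 * ((f X - g X) * (g X - p X)) + (g X - p X) ^ 2 := by
      intro X; ring
    rw [Finset.sum_congr rfl (fun X _ => expand X), Finset.sum_add_distrib,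
      Finset.sum_add_distrib, ← Finset.mul_sum, horth]
    ring
  have hle : ∑ X : Finset (Fin n), (f X - p X) ^ 2 ≤ ∑ X : Finset (Fin n), (f X - g X) ^ 2 := by
    have := hmin d
    simp only [hp]
    calc ∑ X : Finset (Fin n), (f X - ∑ T ∈ S.powerset, c T * unanimity T X) ^ 2
        ≤ ∑ X : Finset (Fin n), (f X - ∑ T ∈ S.powerset, d T * unanimity T X) ^ 2 := this
      _ = ∑ X : Finset (Fin n), (f X - g X) ^ 2 := by
          apply Finset.sum_congr rfl
          intro X _
          rw [hd X]
  have hzero : ∑ X : Finset (Fin n), (g X - p X) ^ 2 = 0 := by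
    have h1 : ∑ X : Finset (Fin n), (g X - p X) ^ 2 ≤ 0 := by linarith [hpyth, hle]
    have h2 : 0 ≤ ∑ X : Finset (Fin n), (g X - p X) ^ 2 :=
      Finset.sum_nonneg (fun X _ => sq_nonneg _)
    linarith
  have hpg : ∀ X : Finset (Fin n), p X = g X := by
    intro X
    have := (Finset.sum_eq_zero_iff_of_nonneg (fun X _ => sq_nonneg (g X - p X))).mp hzero
      X (Finset.mem_univ X)
    have := sq_eq_zero_iff.mp this
    linarith
  have hfinal : banzhafInfluence f S = g S - g (∅ : Finset (Fin n)) := by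
    unfold banzhafInfluence
    rw [hgdef]
    unfold condExp
    rw [Finset.inter_self, Finset.empty_inter, ← mul_sub, ← Finset.sum_sub_distrib]
    congr 1
    apply Finset.sum_congr rfl
    intro A _
    rw [Finset.union_comm, Finset.empty_union]
  rw [hfinal, ← hpg S, ← hpg (∅ : Finset (Fin n))]
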